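/- (Lemma F.2, σ_max case: second-moment bound) Under the setting of the matrix invariant (forward invariants for s_1,…,s_l with 0 < ‖r^{s_j}‖₁ ≤ r^s_max, backward invariants for t_1,…,t_l with entries of r^{t_j} in [0, r^t_max]), let σ_{s_j} := r^{s_j}/‖r^{s_j}‖₁, ‖Σ‖_{∞,1} := Σ_{u∈V} max_j σ_{s_j}(u), and σ := σ_max where σ_max(u) = max_j σ_{s_j}(u)/‖Σ‖_{∞,1}; assume σ(u) > 0 for all u ∈ V, and for u, v ∈ V set X(u,v) := R_S^T diag(1/σ) e_u e_v^T R_T ∈ ℝ^{l×l}. Define M₁ := Σ_{u,v∈V} σ(u) π_u(v) X(u,v) X(u,v)^T and M₂ := Σ_{u,v∈V} σ(u) π_u(v) X(u,v)^T X(u,v). Then max{‖M₁‖₂, ‖M₂‖₂} ≤ l ‖Σ‖_{∞,1} r^s_max r^t_max max{‖Π(S,T)‖_∞, ‖Π(S,T)‖₁}, where ‖A‖_∞ and ‖A‖₁ denote the maximum absolute row sum and maximum absolute column sum of A. -/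

import Mathlib

open scoped BigOperators
open Matrix

/-- The Neumann series `∑ (1-α)^i P^i` defining personalized PageRank. -/
noncomputable def pprSeries {V : Type*} [Fintype V] [DecidableEq V]
    (P : Matrix V V ℝ) (α : ℝ) : Matrix V V ℝ :=
  ∑' i : ℕ, (1 - α) ^ i • P ^ i

/-- Personalized PageRank row vector with jump distribution `σ`. -/
noncomputable def ppr {V : Type*} [Fintype V] [DecidableEq V]
    (P : Matrix V V ℝ) (α : ℝ) (σ : V → ℝ) : V → ℝ :=
  Matrix.vecMul (α • σ) (pprSeries P α)

/-- `π_s := π_{e_s}` where `e_s` is the indicator row vector of `s`. -/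
noncomputable def pprPoint {V : Type*} [Fintype V] [DecidableEq V]
    (P : Matrix V V ℝ) (α : ℝ) (s : V) : V → ℝ :=
  ppr P α (Pi.single s 1)

/-- Spectral (operator) norm of an `l × l` real matrix:
`‖A‖₂ = sup { ‖A x‖₂ : ‖x‖₂ = 1 }`. -/
noncomputable def specNorm {l : ℕ} (A : Matrix (Fin l) (Fin l) ℝ) : ℝ :=
  sSup {c : ℝ | ∃ x : Fin l → ℝ, (∑ j, x j ^ 2) = 1 ∧
    c = Real.sqrt (∑ i, (∑ j, A i j * x j) ^ 2)}

/-- Frobenius norm of an `l × l` real matrix. -/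
noncomputable def frobNorm {l : ℕ} (A : Matrix (Fin l) (Fin l) ℝ) : ℝ :=
  Real.sqrt (∑ i, ∑ j, A i j ^ 2)

section Helpers

lemma specNorm_le_of_rowcol {l : ℕ} (A : Matrix (Fin l) (Fin l) ℝ)
    (hA : ∀ i j, 0 ≤ A i j) (c : ℝ) (hc : 0 ≤ c)
    (hrow : ∀ i, ∑ j, A i j ≤ c) (hcol : ∀ j, ∑ i, A i j ≤ c) :
    specNorm A ≤ c := by
  apply Real.sSup_le _ hc
  rintro y ⟨x, hx, rfl⟩
  rw [show c = Real.sqrt (c ^ 2) by rw [Real.sqrt_sq hc]]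
  apply Real.sqrt_le_sqrt
  have key : ∀ i, (∑ j, A i j * x j) ^ 2 ≤ (∑ j, A i j) * ∑ j, A i j * x j ^ 2 := by
    intro i
    have := Finset.sum_mul_sq_le_sq_mul_sq Finset.univ
      (fun j => Real.sqrt (A i j)) (fun j => Real.sqrt (A i j) * x j)
    have e1 : ∀ j, Real.sqrt (A i j) * (Real.sqrt (A i j) * x j) = A i j * x j := by
      intro j; rw [← mul_assoc, Real.mul_self_sqrt (hA i j)]
    have e2 : ∀ j, Real.sqrt (A i j) ^ 2 = A i j := fun j => Real.sq_sqrt (hA i j)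
    have e3 : ∀ j, (Real.sqrt (A i j) * x j) ^ 2 = A i j * x j ^ 2 := by
      intro j; rw [mul_pow, e2]
    simpa [e1, e2, e3] using this
  calc ∑ i, (∑ j, A i j * x j) ^ 2
      ≤ ∑ i, (∑ j, A i j) * ∑ j, A i j * x j ^ 2 := Finset.sum_le_sum fun i _ => key i
    _ ≤ ∑ i, c * ∑ j, A i j * x j ^ 2 := by
        apply Finset.sum_le_sum
        intro i _
        apply mul_le_mul_of_nonneg_right (hrow i)
        exact Finset.sum_nonneg fun j _ => mul_nonneg (hA i j) (sq_nonneg _)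
    _ = c * ∑ j, (∑ i, A i j) * x j ^ 2 := by
        rw [← Finset.mul_sum, Finset.sum_comm]
        congr 1; apply Finset.sum_congr rfl; intro j _; rw [Finset.sum_mul]
    _ ≤ c * ∑ j, c * x j ^ 2 := by
        apply mul_le_mul_of_nonneg_left _ hc
        exact Finset.sum_le_sum fun j _ =>
          mul_le_mul_of_nonneg_right (hcol j) (sq_nonneg _)
    _ = c ^ 2 := by rw [← Finset.mul_sum, hx]; ring

variable {V : Type*} [Fintype V] [DecidableEq V]
  (P : Matrix V V ℝ) (hP0 : ∀ u v, 0 ≤ P u v) (hP1 : ∀ u, ∑ v, P u v = 1)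

include hP0 hP1 in
lemma pow_entry_nonneg : ∀ i : ℕ, (∀ u v, 0 ≤ (P ^ i) u v) ∧ (∀ u, ∑ v, (P ^ i) u v = 1) := by
  intro i
  induction i with
  | zero =>
    constructor
    · intro u v; simp [Matrix.one_apply]; positivity
    · intro u; simp [Matrix.one_apply]
  | succ n ih =>
    rw [pow_succ]
    constructor
    · intro u v
      rw [Matrix.mul_apply]
      exact Finset.sum_nonneg fun w _ => mul_nonneg (ih.1 u w) (hP0 w v)
    · intro u
      simp only [Matrix.mul_apply]
      rw [Finset.sum_comm]
      calc ∑ w, ∑ v, (P ^ n) u w * P w v = ∑ w, (P ^ n) u w * ∑ v, P w v := by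
            simp [Finset.mul_sum]
        _ = 1 := by simp [hP1, ih.2 u]

include hP0 hP1 in
lemma pow_entry_le_one : ∀ (i : ℕ) (u v : V), (P ^ i) u v ≤ 1 := by
  intro i u v
  obtain ⟨h0, h1⟩ := pow_entry_nonneg P hP0 hP1 i
  calc (P ^ i) u v ≤ ∑ w, (P ^ i) u w :=
        Finset.single_le_sum (fun w _ => h0 u w) (Finset.mem_univ v)
    _ = 1 := h1 u

variable {α : ℝ} (hα0 : 0 < α) (hα1 : α < 1)

include hP0 hP1 hα0 hα1 in
lemma ppr_summable : Summable (fun i : ℕ => (1 - α) ^ i • P ^ i) := by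
  refine Pi.summable.mpr ?_
  intro u
  rw [Pi.summable]
  intro v
  apply Summable.of_nonneg_of_le
    (fun i => by
      have := (pow_entry_nonneg P hP0 hP1 i).1 u v
      have h : (0:ℝ) ≤ (1-α)^i := pow_nonneg (by linarith) i
      simpa using mul_nonneg h this)
    (fun i => by
      have h2 := pow_entry_le_one P hP0 hP1 i u v
      have h : (0:ℝ) ≤ (1-α)^i := pow_nonneg (by linarith) i
      simpa using mul_le_of_le_one_right h h2)
    (summable_geometric_of_lt_one (by linarith) (by linarith))

include hP0 hP1 hα0 hα1 in
lemma pprSeries_apply (u v : V) :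
    pprSeries P α u v = ∑' i : ℕ, (1 - α) ^ i * (P ^ i) u v := by
  have hs := ppr_summable P hP0 hP1 hα0 hα1
  have hs2 : Summable (fun i : ℕ => ((1 - α) ^ i • P ^ i) u) := Pi.summable.mp hs u
  rw [pprSeries]
  exact (congrFun (tsum_apply (f := fun i : ℕ => ((1 - α) ^ i • P ^ i : V → V → ℝ)) (x := u) hs) v).trans
    (tsum_apply hs2)

include hP0 hP1 hα0 hα1 in
lemma pprSeries_nonneg (u v : V) : 0 ≤ pprSeries P α u v := by
  rw [pprSeries_apply P hP0 hP1 hα0 hα1]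
  apply tsum_nonneg
  intro i
  exact mul_nonneg (pow_nonneg (by linarith) i) ((pow_entry_nonneg P hP0 hP1 i).1 u v)

omit hP0 hP1 hα0 hα1 in
lemma pprPoint_eq (x u : V) : pprPoint P α x u = α * pprSeries P α x u := by
  simp [pprPoint, ppr, Matrix.vecMul, dotProduct, Pi.single_apply,
    Finset.sum_ite_eq, ite_mul, mul_comm]

include hP0 hP1 hα0 hα1 in
lemma pprPoint_nonneg (x u : V) : 0 ≤ pprPoint P α x u := by
  rw [pprPoint_eq P]
  exact mul_nonneg hα0.le (pprSeries_nonneg P hP0 hP1 hα0 hα1 x u)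

end Helpers

theorem stmt16 {V : Type*} [Fintype V] [DecidableEq V] [Nonempty V]
    (P : Matrix V V ℝ) (hP0 : ∀ u v, 0 ≤ P u v) (hP1 : ∀ u, ∑ v, P u v = 1)
    (α : ℝ) (hα0 : 0 < α) (hα1 : α < 1)
    (l : ℕ) (hl : 1 ≤ l) (s t : Fin l → V)
    (rsmax rtmax : ℝ)
    (ps rs pt rt : Fin l → V → ℝ)
    (hps0 : ∀ j v, 0 ≤ ps j v) (hrs0 : ∀ j v, 0 ≤ rs j v)
    (hpt0 : ∀ j v, 0 ≤ pt j v) (hrt0 : ∀ j v, 0 ≤ rt j v)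
    -- forward invariant for each s_j, with 0 < ‖r^{s_j}‖₁ ≤ r^s_max
    (hfwd : ∀ j u, pprPoint P α (s j) u = ps j u + ∑ x, rs j x * pprPoint P α x u)
    (hrspos : ∀ j, 0 < ∑ x, |rs j x|) (hrsub : ∀ j, ∑ x, |rs j x| ≤ rsmax)
    -- backward invariant for each t_j, with entries of r^{t_j} in [0, r^t_max]
    (hbwd : ∀ j v, pprPoint P α v (t j) = pt j v + ∑ x, pprPoint P α v x * rt j x)
    (hrtub : ∀ j v, rt j v ≤ rtmax)
    -- ‖Σ‖_{∞,1} = Σ_u max_j σ_{s_j}(u), where σ_{s_j} = r^{s_j}/‖r^{s_j}‖₁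
    (Snorm : ℝ) (hSnorm : Snorm = ∑ u, ⨆ j, rs j u / ∑ x, |rs j x|)
    -- σ = σ_max
    (σ : V → ℝ) (hσdef : σ = fun u => (⨆ j, rs j u / ∑ x, |rs j x|) / Snorm)
    (hσpos : ∀ u, 0 < σ u)
    (RS RT : Matrix V (Fin l) ℝ)
    (hRS : RS = Matrix.of fun u j => rs j u) (hRT : RT = Matrix.of fun u j => rt j u)
    -- X(u,v) = R_Sᵀ diag(1/σ) e_u e_vᵀ R_T
    (X : V → V → Matrix (Fin l) (Fin l) ℝ)
    (hX : X = fun u v => RSᵀ * Matrix.diagonal (fun x => 1 / σ x) *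
      Matrix.single u v (1:ℝ) * RT)
    (PiST : Matrix (Fin l) (Fin l) ℝ)
    (hPiST : PiST = Matrix.of fun i j => pprPoint P α (s i) (t j))
    (M₁ M₂ : Matrix (Fin l) (Fin l) ℝ)
    (hM₁ : M₁ = ∑ u, ∑ v, (σ u * pprPoint P α u v) • (X u v * (X u v)ᵀ))
    (hM₂ : M₂ = ∑ u, ∑ v, (σ u * pprPoint P α u v) • ((X u v)ᵀ * X u v)) :
    max (specNorm M₁) (specNorm M₂) ≤
      (l : ℝ) * Snorm * rsmax * rtmax *
        max (⨆ i, ∑ j, |PiST i j|) (⨆ j, ∑ i, |PiST i j|) := by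
  haveI : Nonempty (Fin l) := ⟨⟨0, hl⟩⟩
  have hπ0 : ∀ u v, 0 ≤ pprPoint P α u v := pprPoint_nonneg P hP0 hP1 hα0 hα1
  set Mx := max (⨆ i, ∑ j, |PiST i j|) (⨆ j, ∑ i, |PiST i j|) with hMxdef
  set K := Snorm * rsmax * rtmax with hKdef
  -- basic positivity facts
  have hSup0 : ∀ u, 0 ≤ ⨆ j, rs j u / ∑ x, |rs j x| := by
    intro u
    have h0 : 0 ≤ rs ⟨0, hl⟩ u / ∑ x, |rs ⟨0, hl⟩ x| :=
      div_nonneg (hrs0 _ _) (hrspos _).le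
    exact h0.trans (le_ciSup (f := fun j => rs j u / ∑ x, |rs j x|)
      (Set.Finite.bddAbove (Set.finite_range _)) ⟨0, hl⟩)
  have hSnorm_pos : 0 < Snorm := by
    by_contra h
    push_neg at h
    obtain u₀ : V := Classical.arbitrary V
    have hσu : 0 < (⨆ j, rs j u₀ / ∑ x, |rs j x|) / Snorm := by
      have := hσpos u₀; rw [hσdef] at this; exact this
    have h2 : (⨆ j, rs j u₀ / ∑ x, |rs j x|) / Snorm ≤ 0 :=
      div_nonpos_of_nonneg_of_nonpos (hSup0 u₀) h
    linarith
  have hrsmax_pos : 0 < rsmax := lt_of_lt_of_le (hrspos ⟨0, hl⟩) (hrsub ⟨0, hl⟩)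
  have hrtmax0 : 0 ≤ rtmax :=
    le_trans (hrt0 ⟨0, hl⟩ (Classical.arbitrary V)) (hrtub ⟨0, hl⟩ (Classical.arbitrary V))
  have hPiST0 : ∀ i j, 0 ≤ PiST i j := by
    intro i j; rw [hPiST]; exact hπ0 _ _
  have hMx0 : 0 ≤ Mx := by
    have h0 : 0 ≤ ∑ j, |PiST (⟨0, hl⟩ : Fin l) j| :=
      Finset.sum_nonneg fun j _ => abs_nonneg _
    have := le_ciSup (f := fun i => ∑ j, |PiST i j|)
      (Set.Finite.bddAbove (Set.finite_range _)) (⟨0, hl⟩ : Fin l)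
    exact le_trans (h0.trans this) (le_max_left _ _)
  have hK0 : 0 ≤ K := by
    have := mul_nonneg (mul_nonneg hSnorm_pos.le hrsmax_pos.le) hrtmax0
    simpa [hKdef] using this
  have hc0 : 0 ≤ (l : ℝ) * Snorm * rsmax * rtmax * Mx := by
    exact mul_nonneg (mul_nonneg (mul_nonneg (mul_nonneg (Nat.cast_nonneg l)
      hSnorm_pos.le) hrsmax_pos.le) hrtmax0) hMx0
  -- key bound on rs / σ
  have hsup_eq : ∀ u, (⨆ j, rs j u / ∑ x, |rs j x|) = σ u * Snorm := by
    intro u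
    rw [hσdef]
    exact (div_mul_cancel₀ _ hSnorm_pos.ne').symm
  have h1' : ∀ (i : Fin l) (u : V), rs i u / σ u ≤ Snorm * rsmax := by
    intro i u
    rw [div_le_iff₀ (hσpos u)]
    have ha : rs i u / (∑ x, |rs i x|) ≤ σ u * Snorm :=
      (le_ciSup (Set.Finite.bddAbove (Set.finite_range _)) i).trans_eq (hsup_eq u)
    have hb : rs i u ≤ σ u * Snorm * ∑ x, |rs i x| := (div_le_iff₀ (hrspos i)).mp ha
    have hσS : 0 ≤ σ u * Snorm := mul_nonneg (hσpos u).le hSnorm_pos.le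
    calc rs i u ≤ σ u * Snorm * ∑ x, |rs i x| := hb
      _ ≤ σ u * Snorm * rsmax := mul_le_mul_of_nonneg_left (hrsub i) hσS
      _ = Snorm * rsmax * σ u := by ring
  -- invariants
  have h2 : ∀ (k : Fin l) (u : V), ∑ v, pprPoint P α u v * rt k v ≤ pprPoint P α u (t k) := by
    intro k u
    have := hbwd k u
    linarith [hpt0 k u]
  have h3 : ∀ (i k : Fin l), ∑ u, rs i u * pprPoint P α u (t k) ≤ PiST i k := by
    intro i k
    have := hfwd i (t k)
    have hE : PiST i k = pprPoint P α (s i) (t k) := by rw [hPiST]; rfl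
    rw [hE]
    linarith [hps0 i (t k)]
  have hcore : ∀ (i k : Fin l),
      ∑ u, ∑ v, pprPoint P α u v * (rs i u * rt k v) ≤ PiST i k := by
    intro i k
    calc ∑ u, ∑ v, pprPoint P α u v * (rs i u * rt k v)
        = ∑ u, rs i u * ∑ v, pprPoint P α u v * rt k v := by
          apply Finset.sum_congr rfl; intro u _
          rw [Finset.mul_sum]; apply Finset.sum_congr rfl; intro v _; ring
      _ ≤ ∑ u, rs i u * pprPoint P α u (t k) :=
          Finset.sum_le_sum fun u _ => mul_le_mul_of_nonneg_left (h2 k u) (hrs0 i u)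
      _ ≤ PiST i k := h3 i k
  have h4 : ∀ i : Fin l, ∑ k, PiST i k ≤ Mx := by
    intro i
    have e : ∑ k, PiST i k = ∑ k, |PiST i k| :=
      Finset.sum_congr rfl fun k _ => (abs_of_nonneg (hPiST0 i k)).symm
    rw [e]
    exact le_trans (le_ciSup (f := fun i => ∑ j, |PiST i j|)
      (Set.Finite.bddAbove (Set.finite_range _)) i) (le_max_left _ _)
  have h5 : ∀ k : Fin l, ∑ i, PiST i k ≤ Mx := by
    intro k
    have e : ∑ i, PiST i k = ∑ i, |PiST i k| :=
      Finset.sum_congr rfl fun i _ => (abs_of_nonneg (hPiST0 i k)).symm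
    rw [e]
    exact le_trans (le_ciSup (f := fun k => ∑ i, |PiST i k|)
      (Set.Finite.bddAbove (Set.finite_range _)) k) (le_max_right _ _)
  -- entries of X
  have hXe : ∀ (u v : V) (i j : Fin l), X u v i j = rs i u / σ u * rt j v := by
    intro u v i j
    rw [hX, hRS, hRT]
    simp only [Matrix.mul_apply, Matrix.single, Matrix.diagonal_apply,
      Matrix.transpose_apply, Matrix.of_apply, mul_ite, mul_one, mul_zero, ite_mul, zero_mul,
      Finset.sum_ite_eq, Finset.sum_ite_eq', Finset.mem_univ, if_true, ite_and]
    ring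
  -- entries of M₁ and M₂
  have hM1e : ∀ i i' : Fin l, M₁ i i' = ∑ u, ∑ v, ∑ k, (σ u * pprPoint P α u v) *
      ((rs i u / σ u * rt k v) * (rs i' u / σ u * rt k v)) := by
    intro i i'
    rw [hM₁]
    simp only [Matrix.sum_apply, Matrix.smul_apply, Matrix.mul_apply,
      Matrix.transpose_apply, smul_eq_mul, hXe, Finset.mul_sum]
  have hM2e : ∀ j j' : Fin l, M₂ j j' = ∑ u, ∑ v, ∑ i, (σ u * pprPoint P α u v) *
      ((rs i u / σ u * rt j v) * (rs i u / σ u * rt j' v)) := by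
    intro j j'
    rw [hM₂]
    simp only [Matrix.sum_apply, Matrix.smul_apply, Matrix.mul_apply,
      Matrix.transpose_apply, smul_eq_mul, hXe, Finset.mul_sum]
  -- nonnegativity of entries
  have htnn : ∀ (u v : V) (a b c d : Fin l), 0 ≤ (σ u * pprPoint P α u v) *
      ((rs a u / σ u * rt b v) * (rs c u / σ u * rt d v)) := by
    intro u v a b c d
    exact mul_nonneg (mul_nonneg (hσpos u).le (hπ0 u v))
      (mul_nonneg (mul_nonneg (div_nonneg (hrs0 a u) (hσpos u).le) (hrt0 b v))
        (mul_nonneg (div_nonneg (hrs0 c u) (hσpos u).le) (hrt0 d v)))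
  have hM1nn : ∀ i i' : Fin l, 0 ≤ M₁ i i' := by
    intro i i'
    rw [hM1e]
    exact Finset.sum_nonneg fun u _ => Finset.sum_nonneg fun v _ =>
      Finset.sum_nonneg fun k _ => htnn u v i k i' k
  have hM2nn : ∀ j j' : Fin l, 0 ≤ M₂ j j' := by
    intro j j'
    rw [hM2e]
    exact Finset.sum_nonneg fun u _ => Finset.sum_nonneg fun v _ =>
      Finset.sum_nonneg fun i _ => htnn u v i j i j'
  -- per-term bound
  have hterm : ∀ (u v : V) (a b c d : Fin l), (σ u * pprPoint P α u v) *
      ((rs a u / σ u * rt b v) * (rs c u / σ u * rt d v)) ≤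
      K * (pprPoint P α u v * (rs a u * rt b v)) := by
    intro u v a b c d
    have hσ := hσpos u
    have e : (σ u * pprPoint P α u v) *
        ((rs a u / σ u * rt b v) * (rs c u / σ u * rt d v))
        = (pprPoint P α u v * (rs a u * rt b v)) * ((rs c u / σ u) * rt d v) := by
      field_simp
    rw [e]
    have hb : (rs c u / σ u) * rt d v ≤ (Snorm * rsmax) * rtmax :=
      mul_le_mul (h1' c u) (hrtub d v) (hrt0 d v)
        (mul_nonneg hSnorm_pos.le hrsmax_pos.le)
    have hnn : 0 ≤ pprPoint P α u v * (rs a u * rt b v) :=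
      mul_nonneg (hπ0 u v) (mul_nonneg (hrs0 a u) (hrt0 b v))
    calc (pprPoint P α u v * (rs a u * rt b v)) * ((rs c u / σ u) * rt d v)
        ≤ (pprPoint P α u v * (rs a u * rt b v)) * ((Snorm * rsmax) * rtmax) :=
          mul_le_mul_of_nonneg_left hb hnn
      _ = K * (pprPoint P α u v * (rs a u * rt b v)) := by rw [hKdef]; ring
  -- sum swap helper
  have hswap : ∀ f : V → V → Fin l → ℝ,
      ∑ u, ∑ v, ∑ k, f u v k = ∑ k, ∑ u, ∑ v, f u v k := by
    intro f
    calc ∑ u, ∑ v, ∑ k, f u v k = ∑ u, ∑ k, ∑ v, f u v k :=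
          Finset.sum_congr rfl fun u _ => Finset.sum_comm
      _ = ∑ k, ∑ u, ∑ v, f u v k := Finset.sum_comm
  -- row-sum bounds
  have hrow1 : ∀ i : Fin l, ∑ i', M₁ i i' ≤ (l : ℝ) * Snorm * rsmax * rtmax * Mx := by
    intro i
    calc ∑ i', M₁ i i'
        = ∑ i' : Fin l, ∑ u, ∑ v, ∑ k, (σ u * pprPoint P α u v) *
            ((rs i u / σ u * rt k v) * (rs i' u / σ u * rt k v)) := by
          apply Finset.sum_congr rfl; intro i' _; exact hM1e i i'
      _ ≤ ∑ i' : Fin l, ∑ u, ∑ v, ∑ k,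
            K * (pprPoint P α u v * (rs i u * rt k v)) :=
          Finset.sum_le_sum fun i' _ => Finset.sum_le_sum fun u _ =>
            Finset.sum_le_sum fun v _ => Finset.sum_le_sum fun k _ => hterm u v i k i' k
      _ = (l : ℝ) * (K * ∑ k, ∑ u, ∑ v, pprPoint P α u v * (rs i u * rt k v)) := by
          rw [Finset.sum_const, Finset.card_univ, Fintype.card_fin, nsmul_eq_mul]
          congr 1
          rw [← hswap (fun u v k => pprPoint P α u v * (rs i u * rt k v))]
          simp only [← Finset.mul_sum]
      _ ≤ (l : ℝ) * (K * ∑ k, PiST i k) := by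
          apply mul_le_mul_of_nonneg_left _ (Nat.cast_nonneg l)
          exact mul_le_mul_of_nonneg_left
            (Finset.sum_le_sum fun k _ => hcore i k) hK0
      _ ≤ (l : ℝ) * (K * Mx) := by
          apply mul_le_mul_of_nonneg_left _ (Nat.cast_nonneg l)
          exact mul_le_mul_of_nonneg_left (h4 i) hK0
      _ = (l : ℝ) * Snorm * rsmax * rtmax * Mx := by rw [hKdef]; ring
  have hrow2 : ∀ j : Fin l, ∑ j', M₂ j j' ≤ (l : ℝ) * Snorm * rsmax * rtmax * Mx := by
    intro j
    calc ∑ j', M₂ j j'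
        = ∑ j' : Fin l, ∑ u, ∑ v, ∑ i, (σ u * pprPoint P α u v) *
            ((rs i u / σ u * rt j v) * (rs i u / σ u * rt j' v)) := by
          apply Finset.sum_congr rfl; intro j' _; exact hM2e j j'
      _ ≤ ∑ j' : Fin l, ∑ u, ∑ v, ∑ i,
            K * (pprPoint P α u v * (rs i u * rt j v)) :=
          Finset.sum_le_sum fun j' _ => Finset.sum_le_sum fun u _ =>
            Finset.sum_le_sum fun v _ => Finset.sum_le_sum fun i _ => hterm u v i j i j'
      _ = (l : ℝ) * (K * ∑ i, ∑ u, ∑ v, pprPoint P α u v * (rs i u * rt j v)) := by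
          rw [Finset.sum_const, Finset.card_univ, Fintype.card_fin, nsmul_eq_mul]
          congr 1
          rw [← hswap (fun u v i => pprPoint P α u v * (rs i u * rt j v))]
          simp only [← Finset.mul_sum]
      _ ≤ (l : ℝ) * (K * ∑ i, PiST i j) := by
          apply mul_le_mul_of_nonneg_left _ (Nat.cast_nonneg l)
          exact mul_le_mul_of_nonneg_left
            (Finset.sum_le_sum fun i _ => hcore i j) hK0
      _ ≤ (l : ℝ) * (K * Mx) := by
          apply mul_le_mul_of_nonneg_left _ (Nat.cast_nonneg l)
          exact mul_le_mul_of_nonneg_left (h5 j) hK0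
      _ = (l : ℝ) * Snorm * rsmax * rtmax * Mx := by rw [hKdef]; ring
  -- symmetry: column sums equal row sums
  have hsym1 : ∀ i i' : Fin l, M₁ i i' = M₁ i' i := by
    intro i i'
    rw [hM1e, hM1e]
    apply Finset.sum_congr rfl; intro u _
    apply Finset.sum_congr rfl; intro v _
    apply Finset.sum_congr rfl; intro k _
    ring
  have hsym2 : ∀ j j' : Fin l, M₂ j j' = M₂ j' j := by
    intro j j'
    rw [hM2e, hM2e]
    apply Finset.sum_congr rfl; intro u _
    apply Finset.sum_congr rfl; intro v _
    apply Finset.sum_congr rfl; intro i _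
    ring
  have hcol1 : ∀ i' : Fin l, ∑ i, M₁ i i' ≤ (l : ℝ) * Snorm * rsmax * rtmax * Mx := by
    intro i'
    calc ∑ i, M₁ i i' = ∑ i, M₁ i' i := Finset.sum_congr rfl fun i _ => hsym1 i i'
      _ ≤ _ := hrow1 i'
  have hcol2 : ∀ j' : Fin l, ∑ j, M₂ j j' ≤ (l : ℝ) * Snorm * rsmax * rtmax * Mx := by
    intro j'
    calc ∑ j, M₂ j j' = ∑ j, M₂ j' j := Finset.sum_congr rfl fun j _ => hsym2 j j'
      _ ≤ _ := hrow2 j'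
  exact max_le
    (specNorm_le_of_rowcol M₁ hM1nn _ hc0 hrow1 hcol1)
    (specNorm_le_of_rowcol M₂ hM2nn _ hc0 hrow2 hcol2)
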